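/- Uniform tubular neighbourhood of a level set (Lemma A.2): Let H:ℝ^m→ℝ be a C² function with Σ:=H⁻¹(0) nonempty, inf_{x∈Σ}‖∇H(x)‖>0 and sup_{x∈ℝ^m}‖D²H_x‖=M<+∞. Then there exists δ̃=δ̃(H)>0 such that the normal exponential map E(x,ρ):=x+ρ·∇H(x)/‖∇H(x)‖, defined for x∈Σ and ρ∈(−δ̃,δ̃), is injective and its image equals {y∈ℝ^m : dist(y,Σ)<δ̃}; in other words, every point at distance less than δ̃ from Σ is uniquely of the form x+ρ·∇H(x)/‖∇H(x)‖ with x∈Σ, |ρ|<δ̃ (the paper concludes that the normal exponential map is a diffeomorphism from the δ̃-disc normal bundle of Σ onto the δ̃-neighbourhood of Σ). -/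

import Mathlib

open Set

noncomputable section

open Metric

section Aux

variable {m : ℕ}


local notation "E" => EuclideanSpace ℝ (Fin m)

lemma grad_inner (H : E → ℝ) (x v : E) :
    (inner ℝ (gradient H x) v : ℝ) = fderiv ℝ H x v :=
  InnerProductSpace.toDual_symm_apply

lemma snd_deriv_bound {H : E → ℝ} (hH : ContDiff ℝ 2 H) {M : ℝ}
    (hM : ∀ x, ‖iteratedFDeriv ℝ 2 H x‖ ≤ M) (x : E) :
    ‖fderiv ℝ (fderiv ℝ H) x‖ ≤ M := by
  have h1 : ‖iteratedFDeriv ℝ 1 (fderiv ℝ H) x‖ ≤ M := by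
    rw [norm_iteratedFDeriv_fderiv]; exact hM x
  refine ContinuousLinearMap.opNorm_le_bound _ ((norm_nonneg _).trans h1) fun v => ?_
  have : fderiv ℝ (fderiv ℝ H) x v = iteratedFDeriv ℝ 1 (fderiv ℝ H) x ![v] := by
    rw [iteratedFDeriv_one_apply]; simp
  rw [this]
  calc ‖iteratedFDeriv ℝ 1 (fderiv ℝ H) x ![v]‖
      ≤ ‖iteratedFDeriv ℝ 1 (fderiv ℝ H) x‖ * ∏ i, ‖(![v] : Fin 1 → E) i‖ :=
        ContinuousMultilinearMap.le_opNorm _ _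
    _ ≤ M * ‖v‖ := by
        simp only [Fin.prod_univ_one, Matrix.cons_val_zero]
        exact mul_le_mul_of_nonneg_right h1 (norm_nonneg v)

lemma fderiv_lip {H : E → ℝ} (hH : ContDiff ℝ 2 H) {M : ℝ}
    (hM : ∀ x, ‖iteratedFDeriv ℝ 2 H x‖ ≤ M) (a b : E) :
    ‖fderiv ℝ H a - fderiv ℝ H b‖ ≤ M * ‖a - b‖ := by
  have hd : ContDiff ℝ 1 (fderiv ℝ H) := hH.fderiv_right (by norm_num)
  exact (convex_univ).norm_image_sub_le_of_norm_fderiv_le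
    (fun x _ => (hd.differentiable one_ne_zero x))
    (fun x _ => snd_deriv_bound hH hM x) (mem_univ b) (mem_univ a)

lemma taylor_bound {H : E → ℝ} (hH : ContDiff ℝ 2 H) {M : ℝ}
    (hM : ∀ x, ‖iteratedFDeriv ℝ 2 H x‖ ≤ M) (a b : E) :
    |H b - H a - fderiv ℝ H a (b - a)| ≤ M * ‖b - a‖ * ‖b - a‖ := by
  have hconv : Convex ℝ (segment ℝ a b) := convex_segment a b
  have := hconv.norm_image_sub_le_of_norm_hasFDerivWithin_le'
    (f := H) (f' := fun z => fderiv ℝ H z) (φ := fderiv ℝ H a) (C := M * ‖b - a‖)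
    (fun z _ => ((hH.differentiable two_ne_zero) z).hasFDerivAt.hasFDerivWithinAt)
    (fun z hz => by
      refine (fderiv_lip hH hM z a).trans ?_
      have hM0 : 0 ≤ M := (norm_nonneg _).trans (hM a)
      obtain ⟨u, v, hu, hv, huv, rfl⟩ := hz
      have : u • a + v • b - a = v • (b - a) := by
        have : u = 1 - v := by linarith
        rw [this]; module
      rw [this, norm_smul]
      have hv1 : v ≤ 1 := by linarith
      simp only [Real.norm_eq_abs, abs_of_nonneg hv]
      exact mul_le_mul_of_nonneg_left (by nlinarith [norm_nonneg (b - a)]) hM0)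
    (left_mem_segment ℝ a b) (right_mem_segment ℝ a b)
  calc |H b - H a - fderiv ℝ H a (b - a)| ≤ M * ‖b - a‖ * ‖b - a‖ := this

/-- key Taylor estimate on the level set -/
lemma key_bound {H : E → ℝ} (hH : ContDiff ℝ 2 H) {M : ℝ}
    (hM : ∀ x, ‖iteratedFDeriv ℝ 2 H x‖ ≤ M) {a b : E}
    (ha : H a = 0) (hb : H b = 0) :
    |(inner ℝ (gradient H a) (b - a) : ℝ)| ≤ M * ‖b - a‖ * ‖b - a‖ := by
  have h := taylor_bound hH hM a b
  rw [ha, hb] at h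
  rw [grad_inner]
  have he : (0:ℝ) - 0 - fderiv ℝ H a (b - a) = -(fderiv ℝ H a (b - a)) := by ring
  rw [he, abs_neg] at h
  exact h

end Aux

set_option maxHeartbeats 2000000 in
/-- **Lemma A.2 (uniform tubular neighbourhood of a level set).**
`H : ℝ^m → ℝ` is `C²`, `Σ = H⁻¹(0)` is nonempty, `inf_Σ ‖∇H‖ > 0` and
`sup ‖D²H‖ = M < ∞`.  Then there is `δ̃ > 0` such that the normal exponential map
`(x,ρ) ↦ x + ρ·∇H(x)/‖∇H(x)‖` is injective on `Σ × (−δ̃, δ̃)` and its image is exactly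
the `δ̃`-neighbourhood of `Σ`. -/
theorem uniform_tubular_neighbourhood {m : ℕ}
    (H : EuclideanSpace ℝ (Fin m) → ℝ) (hH : ContDiff ℝ 2 H)
    (hne : (H ⁻¹' {0}).Nonempty)
    (hgrad : 0 < sInf ((fun x => ‖gradient H x‖) '' (H ⁻¹' {0})))
    (M : ℝ) (hMfin : ∀ x, ‖iteratedFDeriv ℝ 2 H x‖ ≤ M) :
    ∃ δ : ℝ, 0 < δ ∧
      Set.InjOn
        (fun p : EuclideanSpace ℝ (Fin m) × ℝ =>
          p.1 + p.2 • (‖gradient H p.1‖⁻¹ • gradient H p.1))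
        {p | H p.1 = 0 ∧ |p.2| < δ} ∧
      (fun p : EuclideanSpace ℝ (Fin m) × ℝ =>
          p.1 + p.2 • (‖gradient H p.1‖⁻¹ • gradient H p.1))
        '' {p | H p.1 = 0 ∧ |p.2| < δ}
        = {y | Metric.infDist y (H ⁻¹' {0}) < δ} := by
  set c : ℝ := sInf ((fun x => ‖gradient H x‖) '' (H ⁻¹' {0})) with hc_def
  have hc : 0 < c := hgrad
  have hM0 : 0 ≤ M := (norm_nonneg _).trans (hMfin hne.choose)
  have hcle : ∀ x, H x = 0 → c ≤ ‖gradient H x‖ := by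
    intro x hx
    exact csInf_le ⟨0, fun r ⟨z, _, hz⟩ => hz ▸ norm_nonneg _⟩
      ⟨x, by simpa using hx, rfl⟩
  set δ : ℝ := c / (4 * (M + 1)) with hδ_def
  have hδ : 0 < δ := div_pos hc (by linarith)
  have hδc : δ * c⁻¹ * M ≤ 1 / 4 := by
    rw [hδ_def, div_mul_eq_mul_div, div_mul_eq_mul_div, div_le_div_iff₀ (by linarith) (by norm_num)]
    have : c * c⁻¹ = 1 := mul_inv_cancel₀ hc.ne'
    nlinarith [this]
  refine ⟨δ, hδ, ?_, ?_⟩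
  · -- injectivity
    rintro p ⟨hp1, hp2⟩ q ⟨hq1, hq2⟩ heq
    simp only at heq
    set g₁ := gradient H p.1 with hg₁def
    set g₂ := gradient H q.1 with hg₂def
    have hg₁ : c ≤ ‖g₁‖ := hcle _ hp1
    have hg₂ : c ≤ ‖g₂‖ := hcle _ hq1
    have hg₁0 : (0:ℝ) < ‖g₁‖ := hc.trans_le hg₁
    have hg₂0 : (0:ℝ) < ‖g₂‖ := hc.trans_le hg₂
    set d := q.1 - p.1 with hd_def
    have hd : d = p.2 • (‖g₁‖⁻¹ • g₁) - q.2 • (‖g₂‖⁻¹ • g₂) := by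
      rw [hd_def, sub_eq_sub_iff_add_eq_add, ← heq]; abel
    have h2 : (inner ℝ d d : ℝ)
        = p.2 * (‖g₁‖⁻¹ * (inner ℝ g₁ d : ℝ)) - q.2 * (‖g₂‖⁻¹ * (inner ℝ g₂ d : ℝ)) := by
      nth_rewrite 2 [hd]
      rw [inner_sub_right, real_inner_smul_right, real_inner_smul_right,
        real_inner_smul_right, real_inner_smul_right, real_inner_comm d g₁,
        real_inner_comm d g₂]
    have hb₁ : |(inner ℝ g₁ d : ℝ)| ≤ M * ‖d‖ * ‖d‖ := key_bound hH hMfin hp1 hq1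
    have hb₂ : |(inner ℝ g₂ d : ℝ)| ≤ M * ‖d‖ * ‖d‖ := by
      have := key_bound hH hMfin hq1 hp1
      have h1 : (inner ℝ g₂ (p.1 - q.1) : ℝ) = -(inner ℝ g₂ d : ℝ) := by
        rw [hd_def, ← inner_neg_right]; congr 1; abel
      rw [h1, abs_neg] at this
      have h2 : ‖p.1 - q.1‖ = ‖d‖ := by rw [hd_def, norm_sub_rev]
      rwa [h2] at this
    have hi₁ : ‖g₁‖⁻¹ ≤ c⁻¹ := inv_anti₀ hc hg₁
    have hi₂ : ‖g₂‖⁻¹ ≤ c⁻¹ := inv_anti₀ hc hg₂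
    have e1 : |p.2 * (‖g₁‖⁻¹ * (inner ℝ g₁ d : ℝ))| ≤ δ * (c⁻¹ * (M * ‖d‖ * ‖d‖)) := by
      rw [abs_mul, abs_mul, abs_of_nonneg (inv_nonneg.2 (norm_nonneg _))]
      exact mul_le_mul hp2.le
        (mul_le_mul hi₁ hb₁ (abs_nonneg _) (inv_nonneg.2 hc.le))
        (by positivity) hδ.le
    have e2 : |q.2 * (‖g₂‖⁻¹ * (inner ℝ g₂ d : ℝ))| ≤ δ * (c⁻¹ * (M * ‖d‖ * ‖d‖)) := by
      rw [abs_mul, abs_mul, abs_of_nonneg (inv_nonneg.2 (norm_nonneg _))]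
      exact mul_le_mul hq2.le
        (mul_le_mul hi₂ hb₂ (abs_nonneg _) (inv_nonneg.2 hc.le))
        (by positivity) hδ.le
    have hS : ‖d‖ * ‖d‖ = (inner ℝ d d : ℝ) := (real_inner_self_eq_norm_mul_norm d).symm
    have hdd : ‖d‖ * ‖d‖ ≤ 2 * (δ * (c⁻¹ * (M * ‖d‖ * ‖d‖))) := by
      rw [hS, h2]
      linarith [le_abs_self (p.2 * (‖g₁‖⁻¹ * (inner ℝ g₁ d : ℝ))),
        neg_abs_le (q.2 * (‖g₂‖⁻¹ * (inner ℝ g₂ d : ℝ))), e1, e2]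
    have hd0 : ‖d‖ = 0 := by
      have hS0 : (0:ℝ) ≤ ‖d‖ * ‖d‖ := mul_nonneg (norm_nonneg _) (norm_nonneg _)
      have := mul_le_mul_of_nonneg_right hδc hS0
      nlinarith [norm_nonneg d]
    have hx : q.1 = p.1 := by
      have : d = 0 := norm_eq_zero.1 hd0
      rw [hd_def] at this; exact sub_eq_zero.1 this
    have hu1 : ‖(‖g₁‖⁻¹ • g₁ : EuclideanSpace ℝ (Fin m))‖ = 1 :=
      norm_smul_inv_norm (norm_pos_iff.1 hg₁0)
    have hρ : p.2 = q.2 := by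
      rw [hx] at heq
      have hgg : g₂ = g₁ := by rw [hg₂def, hg₁def, hx]
      rw [hgg] at heq
      have h3 : (p.2 - q.2) • (‖g₁‖⁻¹ • g₁) = 0 := by
        have := add_left_cancel heq
        rw [sub_smul, this, sub_self]
      rcases smul_eq_zero.1 h3 with h | h
      · exact sub_eq_zero.1 h
      · exfalso; rw [h, norm_zero] at hu1; norm_num at hu1
    exact Prod.ext hx.symm hρ
  · -- image
    ext y
    simp only [Set.mem_image, Set.mem_setOf_eq]
    constructor
    · rintro ⟨⟨x, ρ⟩, ⟨hx, hρ⟩, rfl⟩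
      simp only
      have hg : c ≤ ‖gradient H x‖ := hcle _ hx
      have hg0' : (0:ℝ) < ‖gradient H x‖ := hc.trans_le hg
      have hu1 : ‖(‖gradient H x‖⁻¹ • gradient H x : EuclideanSpace ℝ (Fin m))‖ = 1 :=
        norm_smul_inv_norm (norm_pos_iff.1 hg0')
      calc Metric.infDist (x + ρ • (‖gradient H x‖⁻¹ • gradient H x)) (H ⁻¹' {0})
          ≤ dist (x + ρ • (‖gradient H x‖⁻¹ • gradient H x)) x :=
            Metric.infDist_le_dist_of_mem (by simpa using hx)
        _ = ‖ρ • (‖gradient H x‖⁻¹ • gradient H x)‖ := by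
            rw [dist_eq_norm]; congr 1; abel
        _ = |ρ| := by rw [norm_smul, hu1, Real.norm_eq_abs, mul_one]
        _ < δ := hρ
    · intro hy
      have hLclosed : IsClosed (H ⁻¹' {0}) :=
        IsClosed.preimage hH.continuous isClosed_singleton
      obtain ⟨x, hxS, hxd⟩ := hLclosed.exists_infDist_eq_dist hne y
      have hxH : H x = 0 := by simpa using hxS
      have hg : c ≤ ‖gradient H x‖ := hcle _ hxH
      have hg0 : (0:ℝ) < ‖gradient H x‖ := hc.trans_le hg
      set g := gradient H x with hgdef
      -- Lagrange multipliers
      have hmin : IsMinOn (fun z : EuclideanSpace ℝ (Fin m) => (inner ℝ (z - y) (z - y) : ℝ))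
          (H ⁻¹' {0}) x := by
        intro z hz
        simp only [Set.mem_setOf_eq]
        rw [real_inner_self_eq_norm_mul_norm, real_inner_self_eq_norm_mul_norm]
        have h1 : dist y x ≤ dist y z := hxd ▸ Metric.infDist_le_dist_of_mem hz
        rw [dist_eq_norm, dist_eq_norm] at h1
        have h2 : ‖x - y‖ ≤ ‖z - y‖ := by rwa [norm_sub_rev y x, norm_sub_rev y z] at h1
        exact mul_self_le_mul_self (norm_nonneg _) h2
      have hextr : IsLocalExtrOn (fun z : EuclideanSpace ℝ (Fin m) => (inner ℝ (z - y) (z - y) : ℝ))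
          {z | H z = H x} x := by
        have hset : {z | H z = H x} = H ⁻¹' {0} := by
          ext z; simp [hxH]
        rw [hset]
        exact Or.inl (eventually_nhdsWithin_of_forall fun z hz => isMinOn_iff.1 hmin z hz)
      have hf' : HasStrictFDerivAt H (fderiv ℝ H x) x := hH.hasStrictFDerivAt two_ne_zero
      have hid : HasStrictFDerivAt (fun z : EuclideanSpace ℝ (Fin m) => z - y)
          (ContinuousLinearMap.id ℝ (EuclideanSpace ℝ (Fin m))) x :=
        (hasStrictFDerivAt_id x).sub_const y
      have hφ' := hid.inner ℝ hid
      obtain ⟨a, b, hab, hmul⟩ := hextr.exists_multipliers_of_hasStrictFDerivAt_1d hf' hφ'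
      have happ : ∀ v, a * fderiv ℝ H x v
          + b * ((inner ℝ (x - y) v : ℝ) + (inner ℝ v (x - y) : ℝ)) = 0 := by
        intro v
        have h0 := ContinuousLinearMap.ext_iff.1 hmul v
        simp only [ContinuousLinearMap.add_apply, ContinuousLinearMap.smul_apply,
          ContinuousLinearMap.comp_apply, ContinuousLinearMap.prod_apply,
          ContinuousLinearMap.id_apply, ContinuousLinearMap.zero_apply,
          fderivInnerCLM_apply, smul_eq_mul] at h0
        exact h0
      set w : EuclideanSpace ℝ (Fin m) := a • g + (2 * b) • (x - y) with hwdef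
      have hw : ∀ v, (inner ℝ w v : ℝ) = 0 := by
        intro v
        rw [hwdef, inner_add_left, real_inner_smul_left, real_inner_smul_left, hgdef,
          grad_inner]
        have h1 := happ v
        have hcomm : (inner ℝ v (x - y) : ℝ) = inner ℝ (x - y) v := real_inner_comm _ _
        rw [hcomm] at h1
        linarith [h1]
      have hw0 : w = 0 := by
        have := hw w
        rwa [inner_self_eq_zero] at this
      have hww : a • g + (2 * b) • (x - y) = 0 := by rw [← hwdef]; exact hw0
      have hb : b ≠ 0 := by
        intro hb0
        have ha : a ≠ 0 := by
          intro ha0; exact hab (by simp [ha0, hb0, Prod.ext_iff])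
        rw [hb0] at hww
        simp only [mul_zero, zero_smul, add_zero] at hww
        rcases smul_eq_zero.1 hww with h | h
        · exact ha h
        · rw [h, norm_zero] at hg0; exact lt_irrefl _ hg0
      have hyx : y - x = (a / (2 * b)) • g := by
        have h2b : (2 * b : ℝ) ≠ 0 := by simpa using hb
        have : (2 * b) • (x - y) = -(a • g) := by
          rw [eq_neg_iff_add_eq_zero, add_comm]; exact hww
        have h3 : x - y = (2 * b)⁻¹ • (-(a • g)) := by
          rw [← this, smul_smul, inv_mul_cancel₀ h2b, one_smul]
        have h4 : y - x = (2 * b)⁻¹ • (a • g) := by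
          rw [← neg_sub x y, h3]; rw [smul_neg, neg_neg]
        rw [h4, smul_smul, div_eq_inv_mul]
      refine ⟨(x, (a / (2 * b)) * ‖g‖), ⟨hxH, ?_⟩, ?_⟩
      · have : |(a / (2 * b)) * ‖g‖| = ‖(a / (2 * b)) • g‖ := by
          rw [norm_smul, Real.norm_eq_abs, abs_mul, abs_of_nonneg (norm_nonneg _)]
        rw [this, ← hyx]
        calc ‖y - x‖ = dist y x := (dist_eq_norm y x).symm
          _ = Metric.infDist y (H ⁻¹' {0}) := hxd.symm
          _ < δ := hy
      · simp only
        rw [smul_smul, mul_assoc, mul_inv_cancel₀ hg0.ne', mul_one, ← hyx]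
        abel
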